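/- Let P^{A,E} be a joint probability distribution on a product of finite sets A × E, let M be a positive integer, and let {f_X} be a universal₂ ensemble of hash functions from A to {1,…,M}. Then for every t with 0 ≤ t ≤ 1/2, E_X d₁(P^{f_X(A),E} | E) ≤ 3 · M^t · e^{φ(t|P^{A,E})}, where e^{φ(t|P^{A,E})} := Σ_{e∈E} ( Σ_{a∈A} P^{A,E}(a,e)^{1/(1−t)} )^{1−t}. -/

import Mathlib

open Finset

private lemma exp_sqrt_le {Ω : Type*} [Fintype Ω] (μ x : Ω → ℝ)
    (hμ0 : ∀ ω, 0 ≤ μ ω) (hμ1 : ∑ ω, μ ω = 1) (hx : ∀ ω, 0 ≤ x ω) :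
    ∑ ω, μ ω * Real.sqrt (x ω) ≤ Real.sqrt (∑ ω, μ ω * x ω) := by
  have h0 : 0 ≤ ∑ ω, μ ω * Real.sqrt (x ω) :=
    Finset.sum_nonneg fun ω _ => mul_nonneg (hμ0 ω) (Real.sqrt_nonneg _)
  rw [← Real.sqrt_sq h0]
  apply Real.sqrt_le_sqrt
  calc (∑ ω, μ ω * Real.sqrt (x ω))^2
      = (∑ ω, Real.sqrt (μ ω) * Real.sqrt (μ ω * x ω))^2 := by
        congr 1
        exact Finset.sum_congr rfl fun ω _ => by
          rw [Real.sqrt_mul (hμ0 ω), ← mul_assoc, Real.mul_self_sqrt (hμ0 ω)]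
    _ ≤ (∑ ω, Real.sqrt (μ ω)^2) * ∑ ω, Real.sqrt (μ ω * x ω)^2 :=
        Finset.sum_mul_sq_le_sq_mul_sq _ _ _
    _ = (∑ ω, μ ω) * ∑ ω, μ ω * x ω := by
        congr 1
        · exact Finset.sum_congr rfl fun ω _ => Real.sq_sqrt (hμ0 ω)
        · exact Finset.sum_congr rfl fun ω _ => Real.sq_sqrt (mul_nonneg (hμ0 ω) (hx ω))
    _ = ∑ ω, μ ω * x ω := by rw [hμ1, one_mul]

private lemma key_lemma {A : Type*} [Fintype A] (p : A → ℝ) (hp : ∀ a, 0 ≤ p a)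
    (M : ℕ) (hM : 0 < M)
    {Ω : Type*} [Fintype Ω] (μ : Ω → ℝ) (hμ0 : ∀ ω, 0 ≤ μ ω) (hμ1 : ∑ ω, μ ω = 1)
    (f : Ω → A → Fin M)
    (huniv : ∀ a a' : A, a ≠ a' →
      ∑ ω ∈ univ.filter (fun ω => f ω a = f ω a'), μ ω ≤ 1 / M)
    (t : ℝ) (ht0 : 0 ≤ t) (ht1 : t ≤ 1 / 2) :
    ∑ ω, μ ω * ∑ m : Fin M,
        |(∑ a ∈ univ.filter (fun a => f ω a = m), p a) - (∑ a, p a) / M|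
      ≤ 3 * (M : ℝ) ^ t * (∑ a, p a ^ (1 / (1 - t))) ^ (1 - t) := by
  classical
  have h1t : (0:ℝ) < 1 - t := by linarith
  set u : ℝ := 1 / (1 - t) with hu_def
  have hu0 : 0 < u := by positivity
  have hu1 : 1 ≤ u := by rw [hu_def, le_div_iff₀ h1t]; linarith
  have hu2 : u ≤ 2 := by rw [hu_def, div_le_iff₀ h1t]; linarith
  have hMpos : (0:ℝ) < M := Nat.cast_pos.mpr hM
  set S : ℝ := ∑ a, p a ^ u with hS_def
  have hS0 : 0 ≤ S := Finset.sum_nonneg fun a _ => Real.rpow_nonneg (hp a) u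
  rcases eq_or_lt_of_le hS0 with hS | hS
  · -- degenerate case: all p a = 0
    have hpz : ∀ a, p a = 0 := by
      intro a
      have h := (Finset.sum_eq_zero_iff_of_nonneg
        (fun a _ => Real.rpow_nonneg (hp a) u)).mp hS.symm a (mem_univ a)
      exact (Real.rpow_eq_zero (hp a) (ne_of_gt hu0)).mp h
    have h0 : S = 0 := hS.symm
    simp [hpz, h0, Real.zero_rpow (ne_of_gt h1t)]
  · -- main case
    set c : ℝ := (S / M) ^ (1 - t) with hc_def
    have hSM : 0 < S / M := div_pos hS hMpos
    have hc : 0 < c := Real.rpow_pos_of_pos hSM _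
    set pL : A → ℝ := fun a => if c < p a then p a else 0 with hpL_def
    set pS : A → ℝ := fun a => if c < p a then 0 else p a with hpS_def
    have hpL0 : ∀ a, 0 ≤ pL a := by
      intro a; rw [hpL_def]; dsimp only; split
      · exact hp a
      · rfl
    have hpS0 : ∀ a, 0 ≤ pS a := by
      intro a; rw [hpS_def]; dsimp only; split
      · rfl
      · exact hp a
    have hsum : ∀ a, pL a + pS a = p a := by
      intro a; rw [hpL_def, hpS_def]; dsimp only; split <;> simp
    have hpSc : ∀ a, pS a ≤ c := by
      intro a; rw [hpS_def]; dsimp only; split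
      · exact hc.le
      · linarith [not_lt.mp (by assumption : ¬ c < p a)]
    have hpSp : ∀ a, pS a ≤ p a := by
      intro a; rw [hpS_def]; dsimp only; split
      · exact hp a
      · exact le_rfl
    set s : ℝ := ∑ a, pS a with hs_def
    -- bound on the large part
    have hBpL : ∑ a, pL a ≤ (M:ℝ)^t * S^(1-t) := by
      have step : ∀ a, pL a ≤ c^(1-u) * p a ^ u := by
        intro a
        rw [hpL_def]; dsimp only; split
        · rename_i h
          have hpa : 0 < p a := lt_trans hc h
          have e : p a = p a ^ (1-u) * p a ^ u := by
            rw [← Real.rpow_add hpa, sub_add_cancel, Real.rpow_one]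
          conv_lhs => rw [e]
          have h1 : p a ^ (1-u) ≤ c ^ (1-u) :=
            Real.rpow_le_rpow_of_nonpos hc h.le (by linarith)
          exact mul_le_mul_of_nonneg_right h1 (Real.rpow_nonneg hpa.le u)
        · exact mul_nonneg (Real.rpow_nonneg hc.le _) (Real.rpow_nonneg (hp a) _)
      have e1 : (1-t) * (1-u) = -t := by rw [hu_def]; field_simp; ring
      calc ∑ a, pL a ≤ ∑ a, c^(1-u) * p a ^ u := Finset.sum_le_sum fun a _ => step a
        _ = c^(1-u) * S := by rw [hS_def, Finset.mul_sum]
        _ = (M:ℝ)^t * S^(1-t) := by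
            rw [hc_def, ← Real.rpow_mul hSM.le, e1, Real.div_rpow hS0 hMpos.le,
              Real.rpow_neg hMpos.le, div_eq_mul_inv, inv_inv,
              show (1:ℝ)-t = -t + 1 by ring, Real.rpow_add hS, Real.rpow_one]
            ring
    -- bound on squares of the small part
    have hBpS : ∑ a, pS a ^ 2 ≤ c^(2-u) * S := by
      have step : ∀ a, pS a ^ 2 ≤ c^(2-u) * p a ^ u := by
        intro a
        have e : pS a ^ 2 = pS a ^ ((2:ℝ)-u) * pS a ^ u := by
          rw [← Real.rpow_add' (hpS0 a) (by rw [sub_add_cancel]; norm_num),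
            sub_add_cancel, Real.rpow_two]
        rw [e]
        exact mul_le_mul (Real.rpow_le_rpow (hpS0 a) (hpSc a) (by linarith))
          (Real.rpow_le_rpow (hpS0 a) (hpSp a) hu0.le)
          (Real.rpow_nonneg (hpS0 a) u) (Real.rpow_nonneg hc.le _)
      calc ∑ a, pS a ^ 2 ≤ ∑ a, c^(2-u) * p a ^ u := Finset.sum_le_sum fun a _ => step a
        _ = c^(2-u) * S := by rw [hS_def, Finset.mul_sum]
    have hkey2 : (M:ℝ) * (c^(2-u) * S) = ((M:ℝ)^t * S^(1-t))^2 := by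
      have e2 : (1-t) * (2-u) = 1-2*t := by rw [hu_def]; field_simp; ring
      rw [hc_def, ← Real.rpow_mul hSM.le, e2, Real.div_rpow hS0 hMpos.le]
      rw [show ((M:ℝ) * (S^(1-2*t) / (M:ℝ)^(1-2*t) * S)) =
        ((M:ℝ)^(1:ℝ) / (M:ℝ)^(1-2*t)) * (S^(1-2*t) * S^(1:ℝ)) by
          rw [Real.rpow_one, Real.rpow_one]; ring]
      rw [← Real.rpow_sub hMpos, ← Real.rpow_add hS]
      rw [show (1:ℝ) - (1-2*t) = t + t by ring, show (1:ℝ)-2*t+1 = (1-t)+(1-t) by ring,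
        Real.rpow_add hMpos, Real.rpow_add hS]
      ring
    -- fiberwise sum
    have hfib : ∀ (ω : Ω) (q : A → ℝ),
        ∑ m : Fin M, ∑ a ∈ univ.filter (fun a => f ω a = m), q a = ∑ a, q a :=
      fun ω q => Finset.sum_fiberwise _ _ _
    -- variance identity
    have hvar : ∀ ω, ∑ m : Fin M,
        ((∑ a ∈ univ.filter (fun a => f ω a = m), pS a) - s/M)^2
        = (∑ m : Fin M, (∑ a ∈ univ.filter (fun a => f ω a = m), pS a)^2) - s^2/M := by
      intro ω
      have hcard : (Finset.univ : Finset (Fin M)).card = M := by simp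
      calc ∑ m : Fin M, ((∑ a ∈ univ.filter (fun a => f ω a = m), pS a) - s/M)^2
          = ∑ m : Fin M, ((∑ a ∈ univ.filter (fun a => f ω a = m), pS a)^2
              - 2*(s/M)*(∑ a ∈ univ.filter (fun a => f ω a = m), pS a) + (s/M)^2) :=
            Finset.sum_congr rfl fun m _ => by ring
        _ = (∑ m : Fin M, (∑ a ∈ univ.filter (fun a => f ω a = m), pS a)^2)
              - 2*(s/M)*(∑ m : Fin M, ∑ a ∈ univ.filter (fun a => f ω a = m), pS a)
              + M*(s/M)^2 := by
            rw [Finset.sum_add_distrib, Finset.sum_sub_distrib, ← Finset.mul_sum,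
              Finset.sum_const, hcard, nsmul_eq_mul]
        _ = _ := by rw [hfib ω pS]; field_simp; ring
    -- expectation of the quadratic term
    have hT : ∀ ω, ∑ m : Fin M, (∑ a ∈ univ.filter (fun a => f ω a = m), pS a)^2
        = ∑ a, ∑ a', (if f ω a' = f ω a then pS a * pS a' else 0) := by
      intro ω
      calc ∑ m : Fin M, (∑ a ∈ univ.filter (fun a => f ω a = m), pS a)^2
          = ∑ m : Fin M, (∑ a, if f ω a = m then pS a else 0) *
              (∑ a', if f ω a' = m then pS a' else 0) :=
            Finset.sum_congr rfl fun m _ => by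
              rw [sq, Finset.sum_filter]
        _ = ∑ m : Fin M, ∑ a, ∑ a',
              (if f ω a = m then pS a else 0) * (if f ω a' = m then pS a' else 0) :=
            Finset.sum_congr rfl fun m _ => Finset.sum_mul_sum _ _ _ _
        _ = ∑ a, ∑ a', ∑ m : Fin M,
              (if f ω a = m then pS a else 0) * (if f ω a' = m then pS a' else 0) := by
            rw [Finset.sum_comm]
            exact Finset.sum_congr rfl fun a _ => Finset.sum_comm
        _ = ∑ a, ∑ a', (if f ω a' = f ω a then pS a * pS a' else 0) := by
            refine Finset.sum_congr rfl fun a _ => Finset.sum_congr rfl fun a' _ => ?_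
            simp only [ite_mul, mul_ite, zero_mul, mul_zero]
            rw [Finset.sum_ite_eq]
            simp [eq_comm]
    have hexp : ∑ ω, μ ω * ∑ m : Fin M,
        (∑ a ∈ univ.filter (fun a => f ω a = m), pS a)^2 ≤ (∑ a, pS a ^ 2) + s^2/M := by
      have e : ∑ ω, μ ω * ∑ m : Fin M, (∑ a ∈ univ.filter (fun a => f ω a = m), pS a)^2
          = ∑ a, ∑ a', (pS a * pS a') *
              (∑ ω ∈ univ.filter (fun ω => f ω a' = f ω a), μ ω) := by
        calc ∑ ω, μ ω * ∑ m : Fin M, (∑ a ∈ univ.filter (fun a => f ω a = m), pS a)^2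
            = ∑ ω, ∑ a, ∑ a', μ ω * (if f ω a' = f ω a then pS a * pS a' else 0) := by
              refine Finset.sum_congr rfl fun ω _ => ?_
              rw [hT ω, Finset.mul_sum]
              exact Finset.sum_congr rfl fun a _ => Finset.mul_sum _ _ _
          _ = ∑ a, ∑ a', ∑ ω, μ ω * (if f ω a' = f ω a then pS a * pS a' else 0) := by
              rw [Finset.sum_comm]
              exact Finset.sum_congr rfl fun a _ => Finset.sum_comm
          _ = _ := by
              refine Finset.sum_congr rfl fun a _ => Finset.sum_congr rfl fun a' _ => ?_
              simp only [mul_ite, mul_zero]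
              rw [← Finset.sum_filter, ← Finset.sum_mul]
              ring
      rw [e]
      have hbound : ∀ a, ∑ a', (pS a * pS a') *
          (∑ ω ∈ univ.filter (fun ω => f ω a' = f ω a), μ ω)
          ≤ pS a ^ 2 + pS a * s / M := by
        intro a
        rw [← Finset.add_sum_erase _ _ (mem_univ a)]
        have hdiag : (∑ ω ∈ univ.filter (fun ω => f ω a = f ω a), μ ω) = 1 := by
          rw [Finset.filter_true_of_mem (fun ω _ => rfl), hμ1]
        have hoff : ∑ a' ∈ univ.erase a, (pS a * pS a') *
            (∑ ω ∈ univ.filter (fun ω => f ω a' = f ω a), μ ω)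
            ≤ ∑ a' ∈ univ.erase a, (pS a * pS a') * (1/M) := by
          refine Finset.sum_le_sum fun a' ha' => ?_
          exact mul_le_mul_of_nonneg_left (huniv a' a (Finset.ne_of_mem_erase ha'))
            (mul_nonneg (hpS0 a) (hpS0 a'))
        have hoff2 : ∑ a' ∈ univ.erase a, (pS a * pS a') * (1/M)
            ≤ ∑ a', (pS a * pS a') * (1/M) := by
          refine Finset.sum_le_sum_of_subset_of_nonneg (Finset.erase_subset _ _)
            fun a' _ _ => mul_nonneg (mul_nonneg (hpS0 a) (hpS0 a')) (by positivity)
        have hfull : ∑ a', (pS a * pS a') * (1/M) = pS a * s / M := by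
          rw [← Finset.sum_mul, ← Finset.mul_sum, ← hs_def]; ring
        calc (pS a * pS a) * (∑ ω ∈ univ.filter (fun ω => f ω a = f ω a), μ ω)
              + ∑ a' ∈ univ.erase a, (pS a * pS a') *
                (∑ ω ∈ univ.filter (fun ω => f ω a' = f ω a), μ ω)
            ≤ (pS a * pS a) * 1 + pS a * s / M := by
              refine add_le_add (le_of_eq (by rw [hdiag])) ?_
              calc _ ≤ _ := hoff
                _ ≤ _ := hoff2
                _ = _ := hfull
          _ = pS a ^ 2 + pS a * s / M := by ring
      calc ∑ a, ∑ a', (pS a * pS a') *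
            (∑ ω ∈ univ.filter (fun ω => f ω a' = f ω a), μ ω)
          ≤ ∑ a, (pS a ^ 2 + pS a * s / M) := Finset.sum_le_sum fun a _ => hbound a
        _ = (∑ a, pS a ^ 2) + s^2/M := by
            have e2 : ∑ a, pS a * s / M = s^2/M := by
              rw [← Finset.sum_div, ← Finset.sum_mul, ← hs_def]
              ring
            rw [Finset.sum_add_distrib, e2]
    -- expected variance bound
    have hvar_exp : ∑ ω, μ ω * ∑ m : Fin M,
        ((∑ a ∈ univ.filter (fun a => f ω a = m), pS a) - s/M)^2 ≤ ∑ a, pS a ^ 2 := by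
      have e : ∑ ω, μ ω * ∑ m : Fin M,
          ((∑ a ∈ univ.filter (fun a => f ω a = m), pS a) - s/M)^2
          = (∑ ω, μ ω * ∑ m : Fin M,
              (∑ a ∈ univ.filter (fun a => f ω a = m), pS a)^2) - s^2/M := by
        calc ∑ ω, μ ω * ∑ m : Fin M,
              ((∑ a ∈ univ.filter (fun a => f ω a = m), pS a) - s/M)^2
            = ∑ ω, (μ ω * (∑ m : Fin M,
                (∑ a ∈ univ.filter (fun a => f ω a = m), pS a)^2) - μ ω * (s^2/M)) :=
              Finset.sum_congr rfl fun ω _ => by rw [hvar ω]; ring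
          _ = _ := by
              rw [Finset.sum_sub_distrib, ← Finset.sum_mul, hμ1, one_mul]
      rw [e]
      have := hexp
      linarith
    -- Cauchy–Schwarz step
    have hC : ∑ ω, μ ω * ∑ m : Fin M,
        |(∑ a ∈ univ.filter (fun a => f ω a = m), pS a) - s/M|
        ≤ (M:ℝ)^t * S^(1-t) := by
      have c1 : ∀ ω, ∑ m : Fin M, |(∑ a ∈ univ.filter (fun a => f ω a = m), pS a) - s/M|
          ≤ Real.sqrt ((M:ℝ) * ∑ m : Fin M,
              ((∑ a ∈ univ.filter (fun a => f ω a = m), pS a) - s/M)^2) := by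
        intro ω
        have h0 : 0 ≤ ∑ m : Fin M,
            |(∑ a ∈ univ.filter (fun a => f ω a = m), pS a) - s/M| :=
          Finset.sum_nonneg fun _ _ => abs_nonneg _
        rw [← Real.sqrt_sq h0]
        apply Real.sqrt_le_sqrt
        calc (∑ m : Fin M, |(∑ a ∈ univ.filter (fun a => f ω a = m), pS a) - s/M|)^2
            = (∑ m : Fin M,
                1 * |(∑ a ∈ univ.filter (fun a => f ω a = m), pS a) - s/M|)^2 := by
              simp
          _ ≤ (∑ _m : Fin M, (1:ℝ)^2) * ∑ m : Fin M,
                |(∑ a ∈ univ.filter (fun a => f ω a = m), pS a) - s/M|^2 :=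
              Finset.sum_mul_sq_le_sq_mul_sq _ _ _
          _ = (M:ℝ) * ∑ m : Fin M,
                ((∑ a ∈ univ.filter (fun a => f ω a = m), pS a) - s/M)^2 := by
              simp [sq_abs]
      calc ∑ ω, μ ω * ∑ m : Fin M,
            |(∑ a ∈ univ.filter (fun a => f ω a = m), pS a) - s/M|
          ≤ ∑ ω, μ ω * Real.sqrt ((M:ℝ) * ∑ m : Fin M,
              ((∑ a ∈ univ.filter (fun a => f ω a = m), pS a) - s/M)^2) :=
            Finset.sum_le_sum fun ω _ => mul_le_mul_of_nonneg_left (c1 ω) (hμ0 ω)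
        _ ≤ Real.sqrt (∑ ω, μ ω * ((M:ℝ) * ∑ m : Fin M,
              ((∑ a ∈ univ.filter (fun a => f ω a = m), pS a) - s/M)^2)) :=
            exp_sqrt_le _ _ hμ0 hμ1 (fun ω => by positivity)
        _ = Real.sqrt ((M:ℝ) * ∑ ω, μ ω * ∑ m : Fin M,
              ((∑ a ∈ univ.filter (fun a => f ω a = m), pS a) - s/M)^2) := by
            congr 1
            rw [Finset.mul_sum]
            exact Finset.sum_congr rfl fun ω _ => by ring
        _ ≤ Real.sqrt (((M:ℝ)^t * S^(1-t))^2) := by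
            apply Real.sqrt_le_sqrt
            calc (M:ℝ) * ∑ ω, μ ω * ∑ m : Fin M,
                  ((∑ a ∈ univ.filter (fun a => f ω a = m), pS a) - s/M)^2
                ≤ (M:ℝ) * ∑ a, pS a ^ 2 := mul_le_mul_of_nonneg_left hvar_exp hMpos.le
              _ ≤ (M:ℝ) * (c^(2-u) * S) := mul_le_mul_of_nonneg_left hBpS hMpos.le
              _ = ((M:ℝ)^t * S^(1-t))^2 := hkey2
        _ = (M:ℝ)^t * S^(1-t) := Real.sqrt_sq (by positivity)
    -- pointwise splitting step
    have stepA : ∀ ω, ∑ m : Fin M,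
        |(∑ a ∈ univ.filter (fun a => f ω a = m), p a) - (∑ a, p a)/M|
        ≤ 2*(∑ a, pL a) + ∑ m : Fin M,
            |(∑ a ∈ univ.filter (fun a => f ω a = m), pS a) - s/M| := by
      intro ω
      have hm : ∀ m : Fin M,
          |(∑ a ∈ univ.filter (fun a => f ω a = m), p a) - (∑ a, p a)/M|
          ≤ ((∑ a ∈ univ.filter (fun a => f ω a = m), pL a) + (∑ a, pL a)/M)
            + |(∑ a ∈ univ.filter (fun a => f ω a = m), pS a) - s/M| := by
        intro m
        have e1 : ∑ a ∈ univ.filter (fun a => f ω a = m), p a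
            = (∑ a ∈ univ.filter (fun a => f ω a = m), pL a)
              + ∑ a ∈ univ.filter (fun a => f ω a = m), pS a := by
          rw [← Finset.sum_add_distrib]
          exact Finset.sum_congr rfl fun a _ => (hsum a).symm
        have e2 : ∑ a, p a = (∑ a, pL a) + s := by
          rw [hs_def, ← Finset.sum_add_distrib]
          exact Finset.sum_congr rfl fun a _ => (hsum a).symm
        have e : (∑ a ∈ univ.filter (fun a => f ω a = m), p a) - (∑ a, p a)/M
            = ((∑ a ∈ univ.filter (fun a => f ω a = m), pL a) - (∑ a, pL a)/M)
              + ((∑ a ∈ univ.filter (fun a => f ω a = m), pS a) - s/M) := by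
          rw [e1, e2]; ring
        rw [e]
        refine le_trans (abs_add_le _ _) (add_le_add_left ?_ _)
        refine le_trans (abs_sub _ _) ?_
        rw [abs_of_nonneg (Finset.sum_nonneg fun a _ => hpL0 a),
          abs_of_nonneg (div_nonneg (Finset.sum_nonneg fun a _ => hpL0 a) hMpos.le)]
      calc ∑ m : Fin M,
            |(∑ a ∈ univ.filter (fun a => f ω a = m), p a) - (∑ a, p a)/M|
          ≤ ∑ m : Fin M, (((∑ a ∈ univ.filter (fun a => f ω a = m), pL a)
              + (∑ a, pL a)/M)
              + |(∑ a ∈ univ.filter (fun a => f ω a = m), pS a) - s/M|) :=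
            Finset.sum_le_sum fun m _ => hm m
        _ = ((∑ m : Fin M, ∑ a ∈ univ.filter (fun a => f ω a = m), pL a)
              + ∑ m : Fin M, (∑ a, pL a)/M)
              + ∑ m : Fin M,
                |(∑ a ∈ univ.filter (fun a => f ω a = m), pS a) - s/M| := by
            rw [Finset.sum_add_distrib, Finset.sum_add_distrib]
        _ = 2*(∑ a, pL a) + ∑ m : Fin M,
              |(∑ a ∈ univ.filter (fun a => f ω a = m), pS a) - s/M| := by
            rw [hfib ω pL, Finset.sum_const, card_univ, Fintype.card_fin, nsmul_eq_mul]
            field_simp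
            ring
    -- final assembly
    calc ∑ ω, μ ω * ∑ m : Fin M,
          |(∑ a ∈ univ.filter (fun a => f ω a = m), p a) - (∑ a, p a)/M|
        ≤ ∑ ω, μ ω * (2*(∑ a, pL a) + ∑ m : Fin M,
            |(∑ a ∈ univ.filter (fun a => f ω a = m), pS a) - s/M|) :=
          Finset.sum_le_sum fun ω _ => mul_le_mul_of_nonneg_left (stepA ω) (hμ0 ω)
      _ = 2*(∑ a, pL a) + ∑ ω, μ ω * ∑ m : Fin M,
            |(∑ a ∈ univ.filter (fun a => f ω a = m), pS a) - s/M| := by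
          simp only [mul_add]
          rw [Finset.sum_add_distrib, ← Finset.sum_mul, hμ1, one_mul]
      _ ≤ 2*((M:ℝ)^t * S^(1-t)) + (M:ℝ)^t * S^(1-t) := by
          exact add_le_add (by linarith [hBpL]) hC
      _ = 3 * (M:ℝ)^t * S^(1-t) := by ring


/-- For a joint probability distribution `P` on `A × E`, a universal₂ ensemble of hash
functions `f : Ω → A → Fin M`, and every `t ∈ [0, 1/2]`, Eve's expected distinguishability
satisfies `E_X d₁(P^{f_X(A),E}|E) ≤ 3 · M^t · e^{φ(t|P^{A,E})}`, where
`e^{φ(t|P^{A,E})} = ∑_e (∑_a P(a,e)^{1/(1-t)})^{1-t}`. -/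
theorem stmt_15 {A E : Type*} [Fintype A] [Fintype E]
    (P : A → E → ℝ) (hP0 : ∀ a e, 0 ≤ P a e) (hP1 : ∑ a, ∑ e, P a e = 1)
    (M : ℕ) (hM : 0 < M)
    {Ω : Type*} [Fintype Ω] (μ : Ω → ℝ) (hμ0 : ∀ ω, 0 ≤ μ ω) (hμ1 : ∑ ω, μ ω = 1)
    (f : Ω → A → Fin M)
    (huniv : ∀ a a' : A, a ≠ a' →
      ∑ ω ∈ univ.filter (fun ω => f ω a = f ω a'), μ ω ≤ 1 / M)
    (t : ℝ) (ht0 : 0 ≤ t) (ht1 : t ≤ 1 / 2) :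
    ∑ ω, μ ω * ∑ m : Fin M, ∑ e,
        |(∑ a ∈ univ.filter (fun a => f ω a = m), P a e) - (∑ a, P a e) / M|
      ≤ 3 * (M : ℝ) ^ t * ∑ e, (∑ a, P a e ^ (1 / (1 - t))) ^ (1 - t) := by
  calc ∑ ω, μ ω * ∑ m : Fin M, ∑ e,
        |(∑ a ∈ univ.filter (fun a => f ω a = m), P a e) - (∑ a, P a e) / M|
      = ∑ e, ∑ ω, μ ω * ∑ m : Fin M,
          |(∑ a ∈ univ.filter (fun a => f ω a = m), P a e) - (∑ a, P a e) / M| := by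
        rw [Finset.sum_comm]
        refine Finset.sum_congr rfl fun ω _ => ?_
        rw [Finset.sum_comm, Finset.mul_sum]
    _ ≤ ∑ e, 3 * (M : ℝ) ^ t * (∑ a, P a e ^ (1 / (1 - t))) ^ (1 - t) :=
        Finset.sum_le_sum fun e _ => key_lemma (fun a => P a e) (fun a => hP0 a e)
          M hM μ hμ0 hμ1 f huniv t ht0 ht1
    _ = 3 * (M : ℝ) ^ t * ∑ e, (∑ a, P a e ^ (1 / (1 - t))) ^ (1 - t) := by
        rw [Finset.mul_sum]
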